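/- Let 0 < ε < δ < 1. Let f be analytic on the annulus A = {z : 1−δ < |z| < 1+δ}, with f(z) ≥ 0 on |z| = 1 and f not identically zero. Let D be a finite nonempty subset of the unit circle and let γ be analytic on A such that the zero set of γ in A is exactly D and every zero is simple. Let p_0, …, p_{n−1} be polynomials with p_k of degree k, positive leading coefficient, and ∮_{|z|=1} conj(p_j(z)) p_k(z) f(z) dz/(2πiz) = δ_{jk}; let q_j be the conjugate-coefficient polynomial of p_j. Define v(z) = −zγ'(z)/(|D| γ(z)) for |z| = 1−ε and v(z) = zγ'(z)/(|D| γ(z)) − 1 for |z| = 1+ε. Then the discrete Toeplitz determinant satisfies T_n(f, D) = 𝒯_n(f) · det[ δ_{jk} + ∮_{|z|=1−ε} q_j(1/z) p_k(z) f(z) v(z) dz/(2πiz) + ∮_{|z|=1+ε} q_j(1/z) p_k(z) f(z) v(z) dz/(2πiz) ]_{j,k=0}^{n−1}, all circles positively oriented. -/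

import Mathlib

open Finset Metric Set Complex Filter Topology

noncomputable section

lemma circleIntegrable_finset_sum {ι : Type*} (s : Finset ι) (g : ι → ℂ → ℂ) (c : ℂ) (R : ℝ)
    (h : ∀ i ∈ s, CircleIntegrable (g i) c R) :
    CircleIntegrable (fun z => ∑ i ∈ s, g i z) c R := by
  have := IntervalIntegrable.sum (μ := MeasureTheory.volume) (a := 0) (b := 2 * Real.pi) s
    (f := fun i (θ : ℝ) => g i (circleMap c R θ)) h
  simp only [Finset.sum_fn] at this
  exact this

lemma circleIntegral_finset_sum {ι : Type*} (s : Finset ι) (g : ι → ℂ → ℂ) (c : ℂ) (R : ℝ)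
    (h : ∀ i ∈ s, CircleIntegrable (g i) c R) :
    (∮ z in C(c, R), ∑ i ∈ s, g i z) = ∑ i ∈ s, ∮ z in C(c, R), g i z := by
  simp only [circleIntegral, smul_sum]
  exact intervalIntegral.integral_finset_sum (fun i hi => (h i hi).out)

lemma conj_poly_eval {P : Polynomial ℂ} {z : ℂ} (hz : ‖z‖ = 1) :
    (starRingEnd ℂ) (P.eval z) = (P.map (starRingEnd ℂ)).eval (1 / z) := by
  have : (1 / z) = (starRingEnd ℂ) z := by
    rw [one_div, Complex.inv_def]
    simp [Complex.normSq_eq_norm_sq, hz]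
  rw [this, Polynomial.eval_map, ← Polynomial.eval₂_at_apply]


lemma residue_key {ε δ : ℝ} (hε : 0 < ε) (hεδ : ε < δ) (hδ : δ < 1)
    {A : Set ℂ} (hA : A = {z : ℂ | 1 - δ < ‖z‖ ∧ ‖z‖ < 1 + δ})
    {γ : ℂ → ℂ} (hγ : AnalyticOnNhd ℂ γ A)
    {D : Finset ℂ} (hDcirc : ∀ z ∈ D, ‖z‖ = 1)
    (hzero : ∀ z ∈ A, (γ z = 0 ↔ z ∈ D))
    (hsimple : ∀ z ∈ D, deriv γ z ≠ 0)
    {h : ℂ → ℂ} (hh : ∀ z ∈ A, DifferentiableAt ℂ h z) :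
    (∮ z in C(0, 1 + ε), h z * (deriv γ z / γ z))
      - (∮ z in C(0, 1 - ε), h z * (deriv γ z / γ z))
      = (2 * Real.pi * Complex.I) * ∑ w ∈ D, h w := by
  classical
  have hδ0 : 0 < δ := hε.trans hεδ
  have hmem : ∀ z : ℂ, 1 - δ < ‖z‖ → ‖z‖ < 1 + δ → z ∈ A := by
    intro z h1 h2; rw [hA]; exact ⟨h1, h2⟩
  have hAopen : IsOpen A := by
    rw [hA]
    exact (isOpen_lt continuous_const continuous_norm).inter
      (isOpen_lt continuous_norm continuous_const)
  have hDA : ∀ w ∈ D, w ∈ A := fun w hw =>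
    hmem w (by rw [hDcirc w hw]; linarith) (by rw [hDcirc w hw]; linarith)
  have hγd : AnalyticOnNhd ℂ (deriv γ) A := hγ.deriv
  have hγne : ∀ z ∈ A, z ∉ (D : Set ℂ) → γ z ≠ 0 := by
    intro z hz hzD hc
    exact hzD ((hzero z hz).1 hc)
  set G : ℂ → ℂ := fun z => h z * (deriv γ z / γ z) - ∑ w ∈ D, h w * (z - w)⁻¹ with hG
  have hGd : ∀ z, z ∈ A → z ∉ (D : Set ℂ) → DifferentiableAt ℂ G z := by
    intro z hz hzD
    refine DifferentiableAt.sub ?_ ?_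
    · exact (hh z hz).mul (((hγd z hz).differentiableAt).div
        ((hγ z hz).differentiableAt) (hγne z hz hzD))
    · refine DifferentiableAt.fun_sum fun w hw => (differentiableAt_const _).mul ?_
      exact (differentiableAt_id.sub_const w).inv
        (sub_ne_zero.2 (fun hzw => hzD (by simp only [id_eq] at hzw; rw [hzw]; exact hw)))
  set F : ℂ → ℂ := fun z => if z ∈ D then limUnder (𝓝[≠] z) G else G z with hF
  have hFd : ∀ z ∈ A, DifferentiableAt ℂ F z := by
    intro w hwA
    by_cases hw : w ∈ D
    · -- removable singularity at w
      have hU : IsOpen (A \ ((D.erase w : Finset ℂ) : Set ℂ)) :=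
        hAopen.sdiff (D.erase w).finite_toSet.isClosed
      have hwU : w ∈ A \ ((D.erase w : Finset ℂ) : Set ℂ) :=
        ⟨hwA, by simp⟩
      have hs : A \ (D : Set ℂ) ∈ 𝓝[≠] w := by
        rw [mem_nhdsWithin]
        refine ⟨A \ ((D.erase w : Finset ℂ) : Set ℂ), hU, hwU, ?_⟩
        rintro z ⟨⟨hzA, hze⟩, hzw⟩
        refine ⟨hzA, fun hzD => hze ?_⟩
        simp only [Finset.coe_erase, Set.mem_diff, Finset.mem_coe] at *
        exact ⟨hzD, hzw⟩
      have hd : DifferentiableOn ℂ G (A \ (D : Set ℂ)) :=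
        fun z hz => (hGd z hz.1 hz.2).differentiableWithinAt
      -- the key limit : (z - w) * G z → 0
      have hslope : Tendsto (fun z => (z - w) / γ z) (𝓝[≠] w) (𝓝 (deriv γ w)⁻¹) := by
        have hder : HasDerivAt γ (deriv γ w) w := (hγ w hwA).differentiableAt.hasDerivAt
        rw [hasDerivAt_iff_tendsto_slope] at hder
        have := hder.inv₀ (hsimple w hw)
        refine this.congr fun z => ?_
        rw [slope_def_field, (hzero w hwA).2 hw, sub_zero, inv_div]
      have hcont : Tendsto (fun z => h z * deriv γ z) (𝓝[≠] w) (𝓝 (h w * deriv γ w)) :=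
        (((hh w hwA).continuousAt.mul (hγd w hwA).differentiableAt.continuousAt).tendsto).mono_left
          nhdsWithin_le_nhds
      have hrest : Tendsto (fun z => (z - w) * ∑ w' ∈ D.erase w, h w' * (z - w')⁻¹)
          (𝓝[≠] w) (𝓝 0) := by
        have hsum : ContinuousAt (fun z => ∑ w' ∈ D.erase w, h w' * (z - w')⁻¹) w := by
          have : DifferentiableAt ℂ (fun z => ∑ w' ∈ D.erase w, h w' * (z - w')⁻¹) w := by
            refine DifferentiableAt.fun_sum fun w' hw' => (differentiableAt_const (h w')).mul ?_
            refine (differentiableAt_id.sub_const w').inv (sub_ne_zero.2 ?_)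
            intro hww'; exact (Finset.ne_of_mem_erase hw') hww'.symm
          exact this.continuousAt
        have h1 : Tendsto (fun z : ℂ => z - w) (𝓝[≠] w) (𝓝 0) := by
          have : Tendsto (fun z : ℂ => z - w) (𝓝 w) (𝓝 (w - w)) :=
            (continuous_id.sub continuous_const).tendsto w
          rw [sub_self] at this
          exact this.mono_left nhdsWithin_le_nhds
        simpa using h1.mul (hsum.tendsto.mono_left nhdsWithin_le_nhds)
      have claim1 : Tendsto (fun z => (z - w) * G z) (𝓝[≠] w) (𝓝 0) := by
        have e1 : ∀ z : ℂ, z ≠ w → (z - w) * G z =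
            (h z * deriv γ z) * ((z - w) / γ z)
              - (h w + (z - w) * ∑ w' ∈ D.erase w, h w' * (z - w')⁻¹) := by
          intro z hzw
          have hsplit : ∑ w' ∈ D, h w' * (z - w')⁻¹
              = h w * (z - w)⁻¹ + ∑ w' ∈ D.erase w, h w' * (z - w')⁻¹ :=
            (Finset.add_sum_erase D _ hw).symm
          have hzw' : (z - w) * (z - w)⁻¹ = 1 := mul_inv_cancel₀ (sub_ne_zero.2 hzw)
          simp only [hG]
          rw [hsplit, mul_sub, mul_add,
            show (z - w) * (h w * (z - w)⁻¹) = h w * ((z - w) * (z - w)⁻¹) by ring, hzw', mul_one]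
          ring
        have := ((hcont.mul hslope).sub
          ((tendsto_const_nhds (x := h w)).add hrest)).congr' (by
            filter_upwards [self_mem_nhdsWithin] with z hz
            exact (e1 z hz).symm)
        have heq : h w * deriv γ w * (deriv γ w)⁻¹ - (h w + 0) = 0 := by
          rw [mul_inv_cancel_right₀ (hsimple w hw), add_zero, sub_self]
        rwa [heq] at this
      have ho : (fun z => G z - G w) =o[𝓝[≠] w] fun z => (z - w)⁻¹ := by
        rw [Asymptotics.isLittleO_iff_tendsto' (by
          filter_upwards [self_mem_nhdsWithin] with z hz h0
          exact absurd (sub_eq_zero.1 (inv_eq_zero.1 h0)) hz)]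
        have h2 : Tendsto (fun z : ℂ => (z - w) * G w) (𝓝[≠] w) (𝓝 0) := by
          have h1 : Tendsto (fun z : ℂ => z - w) (𝓝[≠] w) (𝓝 0) := by
            have : Tendsto (fun z : ℂ => z - w) (𝓝 w) (𝓝 (w - w)) :=
              (continuous_id.sub continuous_const).tendsto w
            rw [sub_self] at this
            exact this.mono_left nhdsWithin_le_nhds
          simpa using h1.mul_const (G w)
        have := claim1.sub h2
        rw [sub_zero] at this
        refine this.congr fun z => ?_
        rw [div_eq_mul_inv, inv_inv]
        ring
      have key := Complex.differentiableOn_update_limUnder_insert_of_isLittleO hs hd ho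
      have hins : insert w (A \ (D : Set ℂ)) ∈ 𝓝 w := by
        refine Filter.mem_of_superset (hU.mem_nhds hwU) ?_
        intro z hz
        by_cases hzw : z = w
        · rw [hzw]; exact Set.mem_insert _ _
        · refine Set.mem_insert_of_mem _ ⟨hz.1, fun hzD => hz.2 ?_⟩
          simp only [Finset.coe_erase, Set.mem_diff, Finset.mem_coe] at *
          exact ⟨hzD, hzw⟩
      have hupd : DifferentiableAt ℂ (Function.update G w (limUnder (𝓝[≠] w) G)) w :=
        (key w (Set.mem_insert _ _)).differentiableAt hins
      refine hupd.congr_of_eventuallyEq ?_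
      refine Filter.eventuallyEq_of_mem (hU.mem_nhds hwU) fun z hz => ?_
      by_cases hzw : z = w
      · subst hzw
        simp only [hF, if_pos hw, Function.update_self]
      · have hzD : z ∉ D := fun hzD => hz.2 (by
          simp only [Finset.coe_erase, Set.mem_diff, Finset.mem_coe]
          exact ⟨hzD, hzw⟩)
        simp only [hF, if_neg hzD, Function.update_of_ne hzw]
    · have hU : IsOpen (A \ (D : Set ℂ)) := hAopen.sdiff D.finite_toSet.isClosed
      have hwU : w ∈ A \ (D : Set ℂ) := ⟨hwA, hw⟩
      refine (hGd w hwA hw).congr_of_eventuallyEq ?_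
      refine Filter.eventuallyEq_of_mem (hU.mem_nhds hwU) fun z hz => ?_
      exact if_neg fun hzD => hz.2 hzD
  have hε1 : (0:ℝ) < 1 - ε := by linarith
  have hsub1 : closedBall (0:ℂ) (1+ε) \ ball 0 (1-ε) ⊆ A := by
    rintro z ⟨hz1, hz2⟩
    rw [mem_closedBall_zero_iff] at hz1
    rw [mem_ball_zero_iff] at hz2
    have hz2' := not_lt.1 hz2
    exact hmem z (by linarith) (by linarith)
  have hFF : (∮ z in C(0, 1+ε), F z) = ∮ z in C(0, 1-ε), F z := by
    refine Complex.circleIntegral_eq_of_differentiable_on_annulus_off_countable hε1 (by linarith)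
      countable_empty (fun z hz => (hFd z (hsub1 hz)).continuousAt.continuousWithinAt) ?_
    intro z hz
    exact hFd z (hsub1 ⟨ball_subset_closedBall hz.1.1,
      fun hb => hz.1.2 (ball_subset_closedBall hb)⟩)
  have hsph : ∀ (r : ℝ), r ≠ 1 → ∀ z ∈ sphere (0:ℂ) r, z ∉ (D : Set ℂ) := by
    intro r hr z hz hzD
    rw [mem_sphere_zero_iff_norm] at hz
    exact hr (by rw [← hz, hDcirc z hzD])
  have hsphA : ∀ r : ℝ, 1 - δ < r → r < 1 + δ → sphere (0:ℂ) r ⊆ A := by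
    intro r h1 h2 z hz
    rw [mem_sphere_zero_iff_norm] at hz
    exact hmem z (by rw [hz]; exact h1)
      (by rw [hz]; exact h2)
  have hGsplit : ∀ (r : ℝ), 0 < r → r ≠ 1 → (sphere (0:ℂ) r ⊆ A) →
      (∮ z in C(0, r), G z)
        = (∮ z in C(0, r), h z * (deriv γ z / γ z))
          - ∑ w ∈ D, h w * ∮ z in C(0, r), (z - w)⁻¹ := by
    intro r hr hr1 hrA
    have hint1 : CircleIntegrable (fun z => h z * (deriv γ z / γ z)) 0 r := by
      refine ContinuousOn.circleIntegrable hr.le ?_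
      intro z hz
      exact (((hh z (hrA hz)).continuousAt).mul
        (((hγd z (hrA hz)).differentiableAt.continuousAt).div
          ((hγ z (hrA hz)).differentiableAt.continuousAt)
          (hγne z (hrA hz) (hsph r hr1 z hz)))).continuousWithinAt
    have hint2 : ∀ w ∈ D, CircleIntegrable (fun z => h w * (z - w)⁻¹) 0 r := by
      intro w hw
      refine ContinuousOn.circleIntegrable hr.le ?_
      intro z hz
      have hzw : z ≠ w := fun hzw => (hsph r hr1 z hz) (by rw [hzw]; exact hw)
      exact (continuousAt_const.mul
        (((continuous_id.sub continuous_const).continuousAt).inv₀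
          (sub_ne_zero.2 hzw))).continuousWithinAt
    calc (∮ z in C(0, r), G z)
        = (∮ z in C(0, r), h z * (deriv γ z / γ z))
          - ∮ z in C(0, r), ∑ w ∈ D, h w * (z - w)⁻¹ :=
          circleIntegral.integral_sub hint1 (circleIntegrable_finset_sum D _ 0 r hint2)
      _ = (∮ z in C(0, r), h z * (deriv γ z / γ z))
          - ∑ w ∈ D, h w * ∮ z in C(0, r), (z - w)⁻¹ := by
          rw [circleIntegral_finset_sum D _ 0 r hint2]
          congr 1
          exact Finset.sum_congr rfl fun w hw => circleIntegral.integral_const_mul _ _ _ _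
  have hres1 : ∀ w ∈ D, (∮ z in C(0, 1+ε), (z - w)⁻¹) = 2 * Real.pi * Complex.I := by
    intro w hw
    refine circleIntegral.integral_sub_inv_of_mem_ball ?_
    rw [mem_ball_zero_iff, hDcirc w hw]; linarith
  have hres2 : ∀ w ∈ D, (∮ z in C(0, 1-ε), (z - w)⁻¹) = 0 := by
    intro w hw
    have hwn : ∀ z ∈ closedBall (0:ℂ) (1-ε), z ≠ w := by
      intro z hz hzw
      rw [mem_closedBall_zero_iff] at hz
      rw [hzw, hDcirc w hw] at hz
      linarith
    refine Complex.circleIntegral_eq_zero_of_differentiable_on_off_countable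
      (f := fun z => (z - w)⁻¹) hε1.le countable_empty ?_ ?_
    · intro z hz
      have : DifferentiableAt ℂ (fun z : ℂ => (z - w)⁻¹) z :=
        (differentiableAt_id.sub_const w).inv (sub_ne_zero.2 (hwn z hz))
      exact this.continuousAt.continuousWithinAt
    · intro z hz
      exact (differentiableAt_id.sub_const w).inv
        (sub_ne_zero.2 (hwn z (ball_subset_closedBall hz.1)))
  have e1 : (∮ z in C(0, 1+ε), F z) = ∮ z in C(0, 1+ε), G z :=
    circleIntegral.integral_congr (by linarith)
      (fun z hz => if_neg (hsph _ (by intro hc; linarith) z hz))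
  have e2 : (∮ z in C(0, 1-ε), F z) = ∮ z in C(0, 1-ε), G z :=
    circleIntegral.integral_congr (by linarith)
      (fun z hz => if_neg (hsph _ (by intro hc; linarith) z hz))
  have hGG : (∮ z in C(0, 1+ε), G z) = ∮ z in C(0, 1-ε), G z := by
    rw [← e1, ← e2, hFF]
  have g1 := hGsplit (1+ε) (by linarith) (by intro hc; linarith)
    (hsphA _ (by linarith) (by linarith))
  have g2 := hGsplit (1-ε) hε1 (by intro hc; linarith)
    (hsphA _ (by linarith) (by linarith))
  have hsum1 : ∑ w ∈ D, h w * (∮ z in C(0, 1+ε), (z - w)⁻¹)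
      = (2 * Real.pi * Complex.I) * ∑ w ∈ D, h w := by
    rw [Finset.mul_sum]
    exact Finset.sum_congr rfl fun w hw => by rw [hres1 w hw]; ring
  have hsum2 : ∑ w ∈ D, h w * (∮ z in C(0, 1-ε), (z - w)⁻¹) = 0 :=
    Finset.sum_eq_zero fun w hw => by rw [hres2 w hw, mul_zero]
  linear_combination g2 - g1 + hGG + hsum1 - hsum2

lemma deform_key {ε δ : ℝ} (hε : 0 < ε) (hεδ : ε < δ) (hδ : δ < 1)
    {A : Set ℂ} (hA : A = {z : ℂ | 1 - δ < ‖z‖ ∧ ‖z‖ < 1 + δ})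
    {h : ℂ → ℂ} (hh : ∀ z ∈ A, DifferentiableAt ℂ h z) :
    (∮ z in C(0, 1 + ε), h z / z) = ∮ z in C(0, 1), h z / z := by
  have hmem : ∀ z : ℂ, 1 - δ < ‖z‖ → ‖z‖ < 1 + δ → z ∈ A := by
    intro z h1 h2; rw [hA]; exact ⟨h1, h2⟩
  have hsub : closedBall (0:ℂ) (1+ε) \ ball 0 1 ⊆ A := by
    rintro z ⟨hz1, hz2⟩
    rw [mem_closedBall_zero_iff] at hz1
    rw [mem_ball_zero_iff] at hz2
    have hz2' := not_lt.1 hz2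
    exact hmem z (by linarith) (by linarith)
  have hdiff : ∀ z : ℂ, z ∈ closedBall (0:ℂ) (1+ε) \ ball 0 1 →
      DifferentiableAt ℂ (fun z => h z / z) z := by
    intro z hz
    have hz2 := not_lt.1 ((mem_ball_zero_iff).not.1 hz.2)
    have hz0 : z ≠ 0 := by
      intro hc; rw [hc] at hz2; simp at hz2; linarith
    exact (hh z (hsub hz)).div differentiableAt_id hz0
  refine Complex.circleIntegral_eq_of_differentiable_on_annulus_off_countable one_pos
    (by linarith) countable_empty
    (fun z hz => (hdiff z hz).continuousAt.continuousWithinAt) ?_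
  intro z hz
  exact hdiff z ⟨ball_subset_closedBall hz.1.1, fun hb => hz.1.2 (ball_subset_closedBall hb)⟩

lemma double_sum_eval {n : ℕ} (pj pk : Polynomial ℂ) (hj : pj.natDegree < n)
    (hk : pk.natDegree < n) {z : ℂ} (hz : ‖z‖ = 1) (c : ℂ) :
    ∑ b : Fin n, ∑ a : Fin n,
        ((starRingEnd ℂ) (pj.coeff a) * pk.coeff b) * (z ^ ((b:ℤ) - (a:ℤ)) * c)
      = (starRingEnd ℂ) (pj.eval z) * pk.eval z * c := by
  have hz0 : z ≠ 0 := by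
    intro hzc; rw [hzc] at hz; simp at hz
  have hcz : (starRingEnd ℂ) z = z⁻¹ :=
    (RCLike.inv_eq_conj (by rw [hz])).symm
  have e1 : pk.eval z = ∑ b : Fin n, pk.coeff b * z ^ (b:ℕ) := by
    rw [Polynomial.eval_eq_sum_range' hk, ← Fin.sum_univ_eq_sum_range]
  have e2 : (starRingEnd ℂ) (pj.eval z)
      = ∑ a : Fin n, (starRingEnd ℂ) (pj.coeff a) * (z ^ (a:ℕ))⁻¹ := by
    rw [Polynomial.eval_eq_sum_range' hj, ← Fin.sum_univ_eq_sum_range, map_sum]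
    refine Finset.sum_congr rfl fun a _ => ?_
    rw [map_mul, map_pow, hcz, inv_pow]
  rw [e1, e2, Finset.sum_mul_sum]
  simp only [Finset.sum_mul]
  conv_rhs => rw [Finset.sum_comm]
  refine Finset.sum_congr rfl fun b _ => ?_
  refine Finset.sum_congr rfl fun a _ => ?_
  have hzpow : z ^ ((b:ℤ) - (a:ℤ)) = z ^ (b:ℕ) * (z ^ (a:ℕ))⁻¹ := by
    rw [zpow_sub₀ hz0, zpow_natCast, zpow_natCast, div_eq_mul_inv]
  rw [hzpow]
  ring

lemma triple_swap {n : ℕ} (D : Finset ℂ) (c : ℂ) (u v : Fin n → ℂ)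
    (g : ℂ → Fin n → Fin n → ℂ) :
    ∑ b : Fin n, (∑ a : Fin n, u a * (c * ∑ z ∈ D, g z a b)) * v b
      = c * ∑ z ∈ D, ∑ b : Fin n, ∑ a : Fin n, (u a * v b) * g z a b := by
  have step1 : ∀ b : Fin n, (∑ a : Fin n, u a * (c * ∑ z ∈ D, g z a b)) * v b
      = ∑ a : Fin n, ∑ z ∈ D, c * ((u a * v b) * g z a b) := by
    intro b
    rw [Finset.sum_mul]
    refine Finset.sum_congr rfl fun a _ => ?_
    rw [Finset.mul_sum, Finset.mul_sum, Finset.sum_mul]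
    refine Finset.sum_congr rfl fun z _ => ?_
    ring
  calc ∑ b : Fin n, (∑ a : Fin n, u a * (c * ∑ z ∈ D, g z a b)) * v b
      = ∑ b : Fin n, ∑ a : Fin n, ∑ z ∈ D, c * ((u a * v b) * g z a b) :=
        Finset.sum_congr rfl fun b _ => step1 b
    _ = ∑ b : Fin n, ∑ z ∈ D, ∑ a : Fin n, c * ((u a * v b) * g z a b) :=
        Finset.sum_congr rfl fun b _ => Finset.sum_comm
    _ = ∑ z ∈ D, ∑ b : Fin n, ∑ a : Fin n, c * ((u a * v b) * g z a b) := Finset.sum_comm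
    _ = c * ∑ z ∈ D, ∑ b : Fin n, ∑ a : Fin n, (u a * v b) * g z a b := by
        rw [Finset.mul_sum]
        refine Finset.sum_congr rfl fun z _ => ?_
        rw [Finset.mul_sum]
        refine Finset.sum_congr rfl fun b _ => ?_
        rw [Finset.mul_sum]

/-- Finite-rank determinant form of Theorem 1 of the paper: the discrete
Toeplitz determinant `T_n(f, D)` equals the continuous Toeplitz determinant `𝒯_n(f)` times the
`n × n` determinant `det[δ_{jk} + ∮_{|z|=1−ε} q_j(1/z) p_k(z) f(z) v(z) dz/(2πiz)
+ ∮_{|z|=1+ε} q_j(1/z) p_k(z) f(z) v(z) dz/(2πiz)]`, where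
`v(z) = −zγ'(z)/(|D|γ(z))` on `|z| = 1−ε` and `v(z) = zγ'(z)/(|D|γ(z)) − 1` on `|z| = 1+ε`. -/
theorem stmt_4 (n : ℕ) (hn : 0 < n) (ε δ : ℝ) (hε : 0 < ε) (hεδ : ε < δ) (hδ : δ < 1)
    (A : Set ℂ) (hA : A = {z : ℂ | 1 - δ < ‖z‖ ∧ ‖z‖ < 1 + δ})
    (f γ : ℂ → ℂ)
    (hf : AnalyticOnNhd ℂ f A)
    (hf_nonneg : ∀ z : ℂ, ‖z‖ = 1 → 0 ≤ (f z).re ∧ (f z).im = 0)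
    (hf_ne : ∃ z : ℂ, ‖z‖ = 1 ∧ f z ≠ 0)
    (D : Finset ℂ) (hD : D.Nonempty) (hDcirc : ∀ z ∈ D, ‖z‖ = 1)
    (hγ : AnalyticOnNhd ℂ γ A)
    (hzero : ∀ z ∈ A, (γ z = 0 ↔ z ∈ D))
    (hsimple : ∀ z ∈ D, deriv γ z ≠ 0)
    (p : Fin n → Polynomial ℂ) (κ : Fin n → ℝ)
    (hdeg : ∀ k, (p k).natDegree = (k : ℕ))
    (hκpos : ∀ k, 0 < κ k)
    (hlead : ∀ k, (p k).leadingCoeff = (κ k : ℂ))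
    (horth : ∀ j k : Fin n,
      (∮ z in C(0, 1), (starRingEnd ℂ) ((p j).eval z) * (p k).eval z * f z / z)
        / (2 * Real.pi * Complex.I) = if j = k then 1 else 0) :
    Matrix.det (Matrix.of fun j k : Fin n =>
      (1 / (D.card : ℂ)) * ∑ z ∈ D, z ^ ((k : ℤ) - (j : ℤ)) * f z)
    = Matrix.det (Matrix.of fun j k : Fin n =>
        (∮ z in C(0, 1), z ^ ((k : ℤ) - (j : ℤ)) * f z / z) / (2 * Real.pi * Complex.I)) *
      Matrix.det (Matrix.of fun j k : Fin n =>
        (if j = k then (1 : ℂ) else 0)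
        + (∮ z in C(0, 1 - ε), ((p j).map (starRingEnd ℂ)).eval (1 / z) * (p k).eval z * f z *
            (-(z * deriv γ z) / ((D.card : ℂ) * γ z)) / z) / (2 * Real.pi * Complex.I)
        + (∮ z in C(0, 1 + ε), ((p j).map (starRingEnd ℂ)).eval (1 / z) * (p k).eval z * f z *
            (z * deriv γ z / ((D.card : ℂ) * γ z) - 1) / z) / (2 * Real.pi * Complex.I)) := by
  classical
  have hδ0 : 0 < δ := hε.trans hεδ
  have hε1 : (0:ℝ) < 1 - ε := by linarith
  have hccne : (2 * (Real.pi : ℂ) * Complex.I) ≠ 0 := Complex.two_pi_I_ne_zero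
  have hmem : ∀ z : ℂ, 1 - δ < ‖z‖ → ‖z‖ < 1 + δ → z ∈ A := by
    intro z h1 h2; rw [hA]; exact ⟨h1, h2⟩
  have hz0 : ∀ z ∈ A, z ≠ 0 := by
    intro z hz hzc
    rw [hA] at hz
    rw [hzc] at hz
    simp only [norm_zero, Set.mem_setOf_eq] at hz
    linarith [hz.1]
  have habs : ∀ (r : ℝ) (z : ℂ), z ∈ sphere (0:ℂ) r → ‖z‖ = r := by
    intro r z hz; rw [mem_sphere_zero_iff_norm] at hz; rw [hz]
  have hsphA : ∀ r : ℝ, 1 - δ < r → r < 1 + δ → sphere (0:ℂ) r ⊆ A := by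
    intro r h1 h2 z hz
    rw [mem_sphere_zero_iff_norm] at hz
    exact hmem z (by rw [hz]; exact h1)
      (by rw [hz]; exact h2)
  have hs1A : sphere (0:ℂ) 1 ⊆ A := hsphA 1 (by linarith) (by linarith)
  have hcard : (D.card : ℂ) ≠ 0 :=
    Nat.cast_ne_zero.2 (Finset.card_ne_zero.2 hD)
  have hγne : ∀ z ∈ A, ‖z‖ ≠ 1 → γ z ≠ 0 := by
    intro z hz h1 hc
    exact h1 (hDcirc z ((hzero z hz).1 hc))
  have hγd : AnalyticOnNhd ℂ (deriv γ) A := hγ.deriv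
  have hgd : ∀ j k : Fin n, ∀ z ∈ A, DifferentiableAt ℂ
      (fun z => ((p j).map (starRingEnd ℂ)).eval (1 / z) * (p k).eval z * f z) z := by
    intro j k z hz
    have h1 : DifferentiableAt ℂ (fun z : ℂ => ((p j).map (starRingEnd ℂ)).eval (1 / z)) z := by
      have hq : DifferentiableAt ℂ (fun w : ℂ => ((p j).map (starRingEnd ℂ)).eval w) (1 / z) :=
        Polynomial.differentiableAt _
      exact hq.comp z ((differentiableAt_const (1:ℂ)).div differentiableAt_id (hz0 z hz))
    exact (h1.mul (Polynomial.differentiableAt _)).mul (hf z hz).differentiableAt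
  have hdegn : ∀ j : Fin n, (p j).natDegree < n := fun j => by rw [hdeg j]; exact j.isLt
  -- Lemma C : the entries of the correction matrix
  have entry : ∀ j k : Fin n,
      ((if j = k then (1:ℂ) else 0)
        + (∮ z in C(0, 1 - ε), ((p j).map (starRingEnd ℂ)).eval (1 / z) * (p k).eval z * f z *
            (-(z * deriv γ z) / ((D.card : ℂ) * γ z)) / z) / (2 * Real.pi * Complex.I)
        + (∮ z in C(0, 1 + ε), ((p j).map (starRingEnd ℂ)).eval (1 / z) * (p k).eval z * f z *
            (z * deriv γ z / ((D.card : ℂ) * γ z) - 1) / z) / (2 * Real.pi * Complex.I))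
      = (1 / (D.card : ℂ)) * ∑ w ∈ D,
          ((p j).map (starRingEnd ℂ)).eval (1 / w) * (p k).eval w * f w := by
    intro j k
    have hC1 : (∮ z in C(0, 1 - ε), ((p j).map (starRingEnd ℂ)).eval (1 / z) * (p k).eval z * f z *
          (-(z * deriv γ z) / ((D.card : ℂ) * γ z)) / z)
        = (-(1 / (D.card : ℂ))) * ∮ z in C(0, 1 - ε),
            ((p j).map (starRingEnd ℂ)).eval (1 / z) * (p k).eval z * f z *
              (deriv γ z / γ z) := by
      rw [← circleIntegral.integral_const_mul]
      refine circleIntegral.integral_congr hε1.le fun z hz => ?_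
      have hzz : z ≠ 0 := by
        intro hc
        have := habs _ z hz
        rw [hc] at this; simp only [norm_zero] at this; linarith
      by_cases hγz : γ z = 0
      · simp [hγz]
      · field_simp
    have hC2 : (∮ z in C(0, 1 + ε), ((p j).map (starRingEnd ℂ)).eval (1 / z) * (p k).eval z * f z *
          (z * deriv γ z / ((D.card : ℂ) * γ z) - 1) / z)
        = (1 / (D.card : ℂ)) * (∮ z in C(0, 1 + ε),
            ((p j).map (starRingEnd ℂ)).eval (1 / z) * (p k).eval z * f z * (deriv γ z / γ z))
          - ∮ z in C(0, 1 + ε),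
            ((p j).map (starRingEnd ℂ)).eval (1 / z) * (p k).eval z * f z / z := by
      have hsA : sphere (0:ℂ) (1+ε) ⊆ A := hsphA _ (by linarith) (by linarith)
      have hint1 : CircleIntegrable (fun z => (1 / (D.card : ℂ)) *
          (((p j).map (starRingEnd ℂ)).eval (1 / z) * (p k).eval z * f z *
            (deriv γ z / γ z))) 0 (1+ε) := by
        refine ContinuousOn.circleIntegrable (by linarith) fun z hz => ?_
        have hzA := hsA hz
        have hγz : γ z ≠ 0 := hγne z hzA (by rw [habs _ z hz]; intro hc; linarith)
        exact (continuousAt_const.mul (((hgd j k z hzA).continuousAt).mul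
          (((hγd z hzA).differentiableAt.continuousAt).div
            ((hγ z hzA).differentiableAt.continuousAt) hγz))).continuousWithinAt
      have hint2 : CircleIntegrable (fun z =>
          ((p j).map (starRingEnd ℂ)).eval (1 / z) * (p k).eval z * f z / z) 0 (1+ε) := by
        refine ContinuousOn.circleIntegrable (by linarith) fun z hz => ?_
        have hzA := hsA hz
        exact (((hgd j k z hzA).continuousAt).div continuousAt_id (hz0 z hzA)).continuousWithinAt
      rw [← circleIntegral.integral_const_mul, ← circleIntegral.integral_sub hint1 hint2]
      refine circleIntegral.integral_congr (by linarith) fun z hz => ?_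
      have hzz : z ≠ 0 := hz0 z (hsA hz)
      by_cases hγz : γ z = 0
      · simp [hγz, neg_div]
      · field_simp
    have hres : (∮ z in C(0, 1 + ε),
          (((p j).map (starRingEnd ℂ)).eval (1 / z) * (p k).eval z * f z) * (deriv γ z / γ z))
        - (∮ z in C(0, 1 - ε),
          (((p j).map (starRingEnd ℂ)).eval (1 / z) * (p k).eval z * f z) * (deriv γ z / γ z))
        = (2 * Real.pi * Complex.I) * ∑ w ∈ D,
            ((p j).map (starRingEnd ℂ)).eval (1 / w) * (p k).eval w * f w :=
      residue_key hε hεδ hδ hA hγ hDcirc hzero hsimple (hgd j k)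
    have hdef : (∮ z in C(0, 1 + ε),
          (((p j).map (starRingEnd ℂ)).eval (1 / z) * (p k).eval z * f z) / z)
        = ∮ z in C(0, 1),
          (((p j).map (starRingEnd ℂ)).eval (1 / z) * (p k).eval z * f z) / z :=
      deform_key hε hεδ hδ hA (hgd j k)
    have hO : (∮ z in C(0, 1),
          ((p j).map (starRingEnd ℂ)).eval (1 / z) * (p k).eval z * f z / z)
        = (2 * Real.pi * Complex.I) * (if j = k then (1:ℂ) else 0) := by
      have e : (∮ z in C(0, 1),
            ((p j).map (starRingEnd ℂ)).eval (1 / z) * (p k).eval z * f z / z)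
          = ∮ z in C(0, 1), (starRingEnd ℂ) ((p j).eval z) * (p k).eval z * f z / z := by
        refine circleIntegral.integral_congr zero_le_one fun z hz => ?_
        rw [conj_poly_eval (habs 1 z hz)]
      rw [e, ← horth j k]
      field_simp
    rw [hC1, hC2, hdef, hO]
    have hres' : (∮ z in C(0, 1 + ε),
          (((p j).map (starRingEnd ℂ)).eval (1 / z) * (p k).eval z * f z) * (deriv γ z / γ z))
        = (∮ z in C(0, 1 - ε),
          (((p j).map (starRingEnd ℂ)).eval (1 / z) * (p k).eval z * f z) * (deriv γ z / γ z))
          + (2 * Real.pi * Complex.I) * ∑ w ∈ D,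
            ((p j).map (starRingEnd ℂ)).eval (1 / w) * (p k).eval w * f w := by
      linear_combination hres
    rw [hres']
    field_simp
    ring
  -- matrix form of orthonormality : Pᴴ T P = 1
  have hintm : ∀ (c : ℂ) (m : ℤ), CircleIntegrable (fun z => c * (z ^ m * f z / z)) 0 1 := by
    intro c m
    refine ContinuousOn.circleIntegrable zero_le_one fun z hz => ?_
    have hzz : z ≠ 0 := hz0 z (hs1A hz)
    exact (continuousAt_const.mul (((continuousAt_zpow₀ z m (Or.inl hzz)).mul
      ((hf z (hs1A hz)).differentiableAt.continuousAt)).div continuousAt_id hzz)).continuousWithinAt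
  have hPT : (Matrix.of fun j a : Fin n => (starRingEnd ℂ) ((p j).coeff a)) *
      (Matrix.of fun j k : Fin n =>
        (∮ z in C(0, 1), z ^ ((k : ℤ) - (j : ℤ)) * f z / z) / (2 * Real.pi * Complex.I)) *
      (Matrix.of fun a k : Fin n => (p k).coeff a) = 1 := by
    ext j k
    simp only [Matrix.mul_apply, Matrix.of_apply, Matrix.one_apply]
    have hin : ∀ b : Fin n, CircleIntegrable (fun z => ∑ a : Fin n,
        ((starRingEnd ℂ) ((p j).coeff a) * (p k).coeff b) *
          (z ^ ((b:ℤ) - (a:ℤ)) * f z / z)) 0 1 :=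
      fun b => circleIntegrable_finset_sum _ _ _ _ (fun a _ => hintm _ _)
    have step1 : ∀ b : Fin n,
        (∑ a : Fin n, (starRingEnd ℂ) ((p j).coeff a) *
          ((∮ z in C(0, 1), z ^ ((b:ℤ) - (a:ℤ)) * f z / z) / (2 * Real.pi * Complex.I))) *
            (p k).coeff b
        = (∮ z in C(0, 1), ∑ a : Fin n,
            ((starRingEnd ℂ) ((p j).coeff a) * (p k).coeff b) *
              (z ^ ((b:ℤ) - (a:ℤ)) * f z / z)) / (2 * Real.pi * Complex.I) := by
      intro b
      rw [circleIntegral_finset_sum _ _ _ _ (fun a _ => hintm _ _), Finset.sum_div,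
        Finset.sum_mul]
      refine Finset.sum_congr rfl fun a _ => ?_
      rw [circleIntegral.integral_const_mul]
      ring
    calc ∑ b : Fin n, (∑ a : Fin n, (starRingEnd ℂ) ((p j).coeff a) *
          ((∮ z in C(0, 1), z ^ ((b:ℤ) - (a:ℤ)) * f z / z) / (2 * Real.pi * Complex.I))) *
            (p k).coeff b
        = ∑ b : Fin n, (∮ z in C(0, 1), ∑ a : Fin n,
            ((starRingEnd ℂ) ((p j).coeff a) * (p k).coeff b) *
              (z ^ ((b:ℤ) - (a:ℤ)) * f z / z)) / (2 * Real.pi * Complex.I) :=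
          Finset.sum_congr rfl fun b _ => step1 b
      _ = (∮ z in C(0, 1), ∑ b : Fin n, ∑ a : Fin n,
            ((starRingEnd ℂ) ((p j).coeff a) * (p k).coeff b) *
              (z ^ ((b:ℤ) - (a:ℤ)) * f z / z)) / (2 * Real.pi * Complex.I) := by
          rw [← Finset.sum_div, ← circleIntegral_finset_sum _ _ _ _ (fun b _ => hin b)]
      _ = (∮ z in C(0, 1),
            (starRingEnd ℂ) ((p j).eval z) * (p k).eval z * f z / z)
              / (2 * Real.pi * Complex.I) := by
          congr 1
          refine circleIntegral.integral_congr zero_le_one fun z hz => ?_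
          have h2 := double_sum_eval (p j) (p k) (hdegn j) (hdegn k) (habs 1 z hz) (f z / z)
          calc ∑ b : Fin n, ∑ a : Fin n,
                ((starRingEnd ℂ) ((p j).coeff a) * (p k).coeff b) *
                  (z ^ ((b:ℤ) - (a:ℤ)) * f z / z)
              = ∑ b : Fin n, ∑ a : Fin n,
                ((starRingEnd ℂ) ((p j).coeff a) * (p k).coeff b) *
                  (z ^ ((b:ℤ) - (a:ℤ)) * (f z / z)) := by
                refine Finset.sum_congr rfl fun b _ => Finset.sum_congr rfl fun a _ => by ring
            _ = (starRingEnd ℂ) ((p j).eval z) * (p k).eval z * (f z / z) := h2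
            _ = (starRingEnd ℂ) ((p j).eval z) * (p k).eval z * f z / z := by ring
      _ = if j = k then 1 else 0 := horth j k
  -- matrix identity Pᴴ M P = S
  have hPM : (Matrix.of fun j a : Fin n => (starRingEnd ℂ) ((p j).coeff a)) *
      (Matrix.of fun j k : Fin n =>
        (1 / (D.card : ℂ)) * ∑ z ∈ D, z ^ ((k : ℤ) - (j : ℤ)) * f z) *
      (Matrix.of fun a k : Fin n => (p k).coeff a)
      = Matrix.of (fun j k : Fin n => (1 / (D.card : ℂ)) * ∑ w ∈ D,
          ((p j).map (starRingEnd ℂ)).eval (1 / w) * (p k).eval w * f w) := by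
    ext j k
    simp only [Matrix.mul_apply, Matrix.of_apply]
    rw [triple_swap D (1 / (D.card : ℂ)) (fun a => (starRingEnd ℂ) ((p j).coeff a))
      (fun b => (p k).coeff b) (fun z a b => z ^ ((b:ℤ) - (a:ℤ)) * f z)]
    refine congrArg _ (Finset.sum_congr rfl fun w hw => ?_)
    have h2 := double_sum_eval (p j) (p k) (hdegn j) (hdegn k) (hDcirc w hw) (f w)
    rw [h2, conj_poly_eval (hDcirc w hw)]
  -- from entries to matrices
  have hRS : (Matrix.of fun j k : Fin n =>
        (if j = k then (1 : ℂ) else 0)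
        + (∮ z in C(0, 1 - ε), ((p j).map (starRingEnd ℂ)).eval (1 / z) * (p k).eval z * f z *
            (-(z * deriv γ z) / ((D.card : ℂ) * γ z)) / z) / (2 * Real.pi * Complex.I)
        + (∮ z in C(0, 1 + ε), ((p j).map (starRingEnd ℂ)).eval (1 / z) * (p k).eval z * f z *
            (z * deriv γ z / ((D.card : ℂ) * γ z) - 1) / z) / (2 * Real.pi * Complex.I))
      = Matrix.of (fun j k : Fin n => (1 / (D.card : ℂ)) * ∑ w ∈ D,
          ((p j).map (starRingEnd ℂ)).eval (1 / w) * (p k).eval w * f w) := by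
    ext j k
    simp only [Matrix.of_apply]
    exact entry j k
  rw [hRS]
  have dT := congrArg Matrix.det hPT
  rw [Matrix.det_mul, Matrix.det_mul, Matrix.det_one] at dT
  have dM := congrArg Matrix.det hPM
  rw [Matrix.det_mul, Matrix.det_mul] at dM
  calc (Matrix.of fun j k : Fin n =>
        (1 / (D.card : ℂ)) * ∑ z ∈ D, z ^ ((k : ℤ) - (j : ℤ)) * f z).det
      = ((Matrix.of fun j a : Fin n => (starRingEnd ℂ) ((p j).coeff a)).det *
          (Matrix.of fun j k : Fin n =>
            (∮ z in C(0, 1), z ^ ((k : ℤ) - (j : ℤ)) * f z / z)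
              / (2 * Real.pi * Complex.I)).det *
          (Matrix.of fun a k : Fin n => (p k).coeff a).det) *
        (Matrix.of fun j k : Fin n =>
          (1 / (D.card : ℂ)) * ∑ z ∈ D, z ^ ((k : ℤ) - (j : ℤ)) * f z).det := by
        rw [dT, one_mul]
    _ = (Matrix.of fun j k : Fin n =>
          (∮ z in C(0, 1), z ^ ((k : ℤ) - (j : ℤ)) * f z / z)
            / (2 * Real.pi * Complex.I)).det *
        ((Matrix.of fun j a : Fin n => (starRingEnd ℂ) ((p j).coeff a)).det *
          (Matrix.of fun j k : Fin n =>
            (1 / (D.card : ℂ)) * ∑ z ∈ D, z ^ ((k : ℤ) - (j : ℤ)) * f z).det *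
          (Matrix.of fun a k : Fin n => (p k).coeff a).det) := by ring
    _ = _ := by rw [dM]
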